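/- Let μ be a probability measure on the unit circle S¹ with arclength distance d, and let p* ∈ S¹ be a global minimizer of the Fréchet functional F_μ. Define G(θ) = F_μ(e_{p*}(θ)) − F_μ(p*) for θ ∈ [−π,π). Then G(θ) = 2π ∫₀^θ ( t/(2π) − μ_{p*}([−π,−π+t)) ) dt for 0 ≤ θ < π, and G(θ) = 2π ∫_θ^0 ( −t/(2π) − μ_{p*}([π+t,π)) ) dt for −π ≤ θ < 0. -/

import Mathlib

open MeasureTheory Real Set Filter
open scoped ENNReal

noncomputable section

/-- The unit circle `S¹` in `ℝ² ≃ ℂ`. -/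
abbrev S1 := {x : ℂ // ‖x‖ = 1}

/-- The arclength distance on `S¹`. -/
def dS1 (x p : S1) : ℝ := 2 * Real.arcsin (‖(x : ℂ) - (p : ℂ)‖ / 2)

/-- The Fréchet functional of a measure `μ` on `S¹`. -/
def frechet (μ : Measure S1) (p : S1) : ℝ := (1/2) * ∫ x, (dS1 x p)^2 ∂μ

/-- The normal coordinate chart centered at `p`: `θ ↦ R_θ p`. -/
def chart (p : S1) (θ : ℝ) : S1 :=
  ⟨Complex.exp (θ * Complex.I) * (p : ℂ), by
    rw [norm_mul, Complex.norm_exp_ofReal_mul_I, p.2, mul_one]⟩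

/-- The inverse chart, with values in `[-π, π)`. -/
def invChart (p₀ : S1) (p : S1) : ℝ :=
  if Complex.arg ((p : ℂ) / (p₀ : ℂ)) = π then -π else Complex.arg ((p : ℂ) / (p₀ : ℂ))

/-- The image measure `μ_{p₀}` of `μ` in the normal chart centered at `p₀`. -/
def chartMeasure (μ : Measure S1) (p₀ : S1) : Measure ℝ := Measure.map (invChart p₀) μ

/-- `m(μ_{p₀})`, the Euclidean mean of the image measure in the chart centered at `p₀`. -/
def mMean (μ : Measure S1) (p₀ : S1) : ℝ := ∫ t, t ∂(chartMeasure μ p₀)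

/-- The antipodal point (cut locus) of `p`. -/
def antipode (p : S1) : S1 := ⟨-(p : ℂ), by rw [norm_neg]; exact p.2⟩

/-- The (left-continuous extension of the) derivative of `θ ↦ F_μ(e_{p₀}(θ))`. -/
def extDerivS1 (μ : Measure S1) (p₀ : S1) (θ : ℝ) : ℝ :=
  if 0 ≤ θ then θ - 2*π*(chartMeasure μ p₀ (Ico (-π) (-π+θ))).toReal - mMean μ p₀
  else θ + 2*π*(chartMeasure μ p₀ (Ico (π+θ) π)).toReal - mMean μ p₀

def basePt : S1 := ⟨1, by norm_num⟩

/-- The (unnormalized) arclength measure on `S¹`, of total mass `2π`. -/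
def arcMeasure : Measure S1 := Measure.map (chart basePt) (volume.restrict (Ico (-π) π))

/-- Property `P(p, α, φ)` for a density `f` on `S¹`. -/
def propP (f : S1 → ℝ) (p : S1) (α φ : ℝ) : Prop :=
  ∀ θ ∈ Ico (-π) π, φ ≤ |θ| → f (chart p θ) ≤ (1 - α)/(2*π)

def dcirc (u : ℝ) : ℝ := if |u| ≤ π then |u| else 2*π - |u|

lemma norm_exp_sub_one (u : ℝ) : ‖Complex.exp (u*Complex.I) - 1‖ = 2 * |Real.sin (u/2)| := by
  have h2 : ‖Complex.exp (u*Complex.I) - 1‖^2 = (2 * |Real.sin (u/2)|)^2 := by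
    rw [Complex.sq_norm, Complex.exp_mul_I]
    simp only [Complex.normSq_apply, Complex.sq_norm, Complex.normSq_apply]
    push_cast
    simp [Complex.add_re, Complex.add_im, Complex.cos_ofReal_re, Complex.sin_ofReal_re]
    have h3 : Real.sin (u/2)^2 = 1/2 - Real.cos u / 2 := by
      have := Real.sin_sq_eq_half_sub (u/2)
      rw [mul_div_cancel₀] at this <;> simp [this]
    nlinarith [sq_abs (Real.sin (u/2)), Real.sin_sq_add_cos_sq u]
  nlinarith [norm_nonneg (Complex.exp (u*Complex.I) - 1), abs_nonneg (Real.sin (u/2)), h2]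

lemma arc_formula {u : ℝ} (h : |u| ≤ 2*π) : 2 * Real.arcsin (|Real.sin (u/2)|) = dcirc u := by
  have hpi := Real.pi_pos
  wlog hu : 0 ≤ u generalizing u
  · push_neg at hu
    have := this (u := -u) (by rwa [abs_neg]) (by linarith)
    rw [dcirc] at this ⊢
    rw [abs_neg] at this
    rw [← this]; congr 2; rw [neg_div, Real.sin_neg, abs_neg]
  rw [dcirc]
  rw [abs_of_nonneg hu] at h ⊢
  by_cases hc : u ≤ π
  · rw [if_pos hc]
    have hs : 0 ≤ Real.sin (u/2) := Real.sin_nonneg_of_nonneg_of_le_pi (by linarith) (by linarith)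
    rw [abs_of_nonneg hs, Real.arcsin_sin (by linarith) (by linarith)]
    ring
  · rw [if_neg hc]
    push_neg at hc
    have hs : 0 ≤ Real.sin (u/2) := Real.sin_nonneg_of_nonneg_of_le_pi (by linarith) (by linarith)
    have : Real.sin (u/2) = Real.sin (π - u/2) := (Real.sin_pi_sub _).symm
    rw [abs_of_nonneg hs, this, Real.arcsin_sin (by linarith) (by linarith)]
    ring

lemma chart_zero (p : S1) : chart p 0 = p := by
  apply Subtype.ext
  simp [chart]

lemma chart_invChart (p₀ : S1) (x : S1) : chart p₀ (invChart p₀ x) = x := by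
  have hp₀ : (p₀ : ℂ) ≠ 0 := by intro h; have := p₀.2; rw [h] at this; simp at this
  have key : Complex.exp ((Complex.arg ((x:ℂ)/(p₀:ℂ)) : ℂ) * Complex.I) = (x:ℂ)/(p₀:ℂ) := by
    have h1 : ‖(x:ℂ)/(p₀:ℂ)‖ = 1 := by
      rw [norm_div, x.2, p₀.2]
      norm_num
    have := Complex.norm_mul_exp_arg_mul_I ((x:ℂ)/(p₀:ℂ))
    rw [h1] at this; simpa using this
  apply Subtype.ext
  show Complex.exp ((invChart p₀ x : ℂ) * Complex.I) * (p₀:ℂ) = (x:ℂ)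
  unfold invChart
  by_cases h : Complex.arg ((x:ℂ)/(p₀:ℂ)) = π
  · rw [if_pos h]
    push_cast
    have : Complex.exp ((-π : ℂ) * Complex.I) = Complex.exp ((π:ℂ) * Complex.I) := by
      rw [Complex.exp_eq_exp_iff_exists_int]
      exact ⟨-1, by push_cast; ring⟩
    rw [this, ← h, key, div_mul_cancel₀ _ hp₀]
  · rw [if_neg h, key, div_mul_cancel₀ _ hp₀]

lemma invChart_mem (p₀ x : S1) : invChart p₀ x ∈ Ico (-π) π := by
  unfold invChart
  have h1 := Complex.neg_pi_lt_arg ((x:ℂ)/(p₀:ℂ))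
  have h2 := Complex.arg_le_pi ((x:ℂ)/(p₀:ℂ))
  by_cases h : Complex.arg ((x:ℂ)/(p₀:ℂ)) = π
  · rw [if_pos h]; constructor; exact le_refl _; linarith [Real.pi_pos]
  · rw [if_neg h]; exact ⟨le_of_lt h1, lt_of_le_of_ne h2 h⟩

lemma dS1_chart_chart (p : S1) {s θ : ℝ} (hs : s ∈ Ico (-π) π) (hθ : θ ∈ Ico (-π) π) :
    dS1 (chart p s) (chart p θ) = dcirc (s - θ) := by
  have hnorm : ‖(chart p s : ℂ) - (chart p θ : ℂ)‖ = 2 * |Real.sin ((s - θ)/2)| := by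
    show ‖Complex.exp (s * Complex.I) * p - Complex.exp (θ * Complex.I) * p‖ = _
    have : Complex.exp (s * Complex.I) * (p:ℂ) - Complex.exp (θ * Complex.I) * p
        = (Complex.exp (((s - θ : ℝ)) * Complex.I) - 1) * (Complex.exp (θ * Complex.I) * p) := by
      rw [sub_mul, one_mul, ← mul_assoc, ← Complex.exp_add]
      push_cast; ring_nf
    rw [this, norm_mul, norm_mul, Complex.norm_exp_ofReal_mul_I, p.2, mul_one, mul_one,
      norm_exp_sub_one]
  rw [dS1, hnorm]
  rw [show 2 * |Real.sin ((s - θ)/2)| / 2 = |Real.sin ((s - θ)/2)| by ring]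
  apply arc_formula
  rw [abs_le]
  obtain ⟨a1, a2⟩ := hs; obtain ⟨b1, b2⟩ := hθ
  constructor <;> linarith

lemma dcirc_sq_pos {s θ : ℝ} (hs : s ∈ Ico (-π) π) (hθ : θ ∈ Ico 0 π) :
    (1/2) * (dcirc (s-θ))^2 - (1/2) * (dcirc s)^2
      = θ^2/2 - θ*s - 2*π*max (θ - (s+π)) 0 := by
  obtain ⟨a1, a2⟩ := hs; obtain ⟨b1, b2⟩ := hθ
  have hd0 : dcirc s = |s| := by rw [dcirc, if_pos (abs_le.2 ⟨by linarith, by linarith⟩)]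
  by_cases hc : -π ≤ s - θ
  · have : dcirc (s - θ) = |s - θ| := by
      rw [dcirc, if_pos (abs_le.2 ⟨by linarith, by linarith⟩)]
    rw [this, hd0, max_eq_right (by linarith), sq_abs, sq_abs]; ring
  · push_neg at hc
    have habs : |s - θ| = -(s - θ) := abs_of_neg (by linarith)
    have : dcirc (s - θ) = 2*π - (θ - s) := by
      rw [dcirc, if_neg (by rw [habs]; push_neg; linarith), habs]; ring
    rw [this, hd0, max_eq_left (by linarith), sq_abs]; ring

lemma dcirc_sq_neg {s θ : ℝ} (hs : s ∈ Ico (-π) π) (hθ : θ ∈ Ico (-π) 0) :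
    (1/2) * (dcirc (s-θ))^2 - (1/2) * (dcirc s)^2
      = θ^2/2 - θ*s - 2*π*max (s - π - θ) 0 := by
  obtain ⟨a1, a2⟩ := hs; obtain ⟨b1, b2⟩ := hθ
  have hd0 : dcirc s = |s| := by rw [dcirc, if_pos (abs_le.2 ⟨by linarith, by linarith⟩)]
  by_cases hc : s - θ ≤ π
  · have : dcirc (s - θ) = |s - θ| := by
      rw [dcirc, if_pos (abs_le.2 ⟨by linarith, by linarith⟩)]
    rw [this, hd0, max_eq_right (by linarith), sq_abs, sq_abs]; ring
  · push_neg at hc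
    have habs : |s - θ| = s - θ := abs_of_pos (by linarith [Real.pi_pos])
    have : dcirc (s - θ) = 2*π - (s - θ) := by
      rw [dcirc, if_neg (by rw [habs]; push_neg; linarith), habs]
    rw [this, hd0, max_eq_left (by linarith), sq_abs]; ring

lemma dcirc_le {u : ℝ} (h : |u| ≤ 2*π) : |dcirc u| ≤ π := by
  rw [dcirc]
  by_cases hc : |u| ≤ π
  · rw [if_pos hc, abs_abs]; exact hc
  · push_neg at hc
    rw [if_neg (not_le.2 hc)]
    rw [abs_of_nonneg (by linarith)]
    linarith

lemma measurable_dcirc : Measurable dcirc := by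
  unfold dcirc
  exact Measurable.ite (measurableSet_le (measurable_abs) measurable_const)
    measurable_abs ((measurable_const).sub measurable_abs)

instance : BorelSpace S1 := Subtype.borelSpace _
instance : OpensMeasurableSpace S1 := inferInstance

lemma measurable_invChart (p₀ : S1) : Measurable (invChart p₀) := by
  have hg : Measurable (fun x : S1 => Complex.arg ((x:ℂ)/(p₀:ℂ))) := by
    apply Complex.measurable_arg.comp
    exact (continuous_subtype_val.div_const _).measurable
  unfold invChart
  exact Measurable.ite (hg (measurableSet_singleton π)) measurable_const hg

instance chartMeasure_prob (μ : Measure S1) [IsProbabilityMeasure μ] (p₀ : S1) :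
    IsProbabilityMeasure (chartMeasure μ p₀) :=
  Measure.isProbabilityMeasure_map (measurable_invChart p₀).aemeasurable

lemma chartMeasure_compl (μ : Measure S1) [IsProbabilityMeasure μ] (p₀ : S1) :
    chartMeasure μ p₀ ((Ico (-π) π)ᶜ) = 0 := by
  rw [chartMeasure, Measure.map_apply (measurable_invChart p₀) measurableSet_Ico.compl]
  have h : invChart p₀ ⁻¹' (Ico (-π) π)ᶜ = ∅ := by
    ext x; simp [invChart_mem p₀ x]
  rw [h, measure_empty]

lemma chartMeasure_ae (μ : Measure S1) [IsProbabilityMeasure μ] (p₀ : S1) :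
    ∀ᵐ s ∂(chartMeasure μ p₀), s ∈ Ico (-π) π := by
  rw [ae_iff]
  exact measure_mono_null (fun s hs => by simpa using hs) (chartMeasure_compl μ p₀)

lemma chartMeasure_Iio (μ : Measure S1) [IsProbabilityMeasure μ] (p₀ : S1) :
    chartMeasure μ p₀ (Iio (-π)) = 0 := by
  have := chartMeasure_ae μ p₀
  rw [ae_iff] at this
  refine measure_mono_null ?_ this
  intro s hs
  simp only [mem_setOf_eq, mem_Ico, not_and_or, not_le, not_lt]
  left; exact hs

lemma chartMeasure_Ici (μ : Measure S1) [IsProbabilityMeasure μ] (p₀ : S1) :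
    chartMeasure μ p₀ (Ici π) = 0 := by
  have := chartMeasure_ae μ p₀
  rw [ae_iff] at this
  refine measure_mono_null ?_ this
  intro s hs
  simp only [mem_setOf_eq, mem_Ico, not_and_or, not_le, not_lt]
  right; exact hs

lemma frechet_chart (μ : Measure S1) [IsProbabilityMeasure μ] (p₀ : S1) {θ : ℝ}
    (hθ : θ ∈ Ico (-π) π) :
    frechet μ (chart p₀ θ) = (1/2) * ∫ s, (dcirc (s - θ))^2 ∂(chartMeasure μ p₀) := by
  rw [frechet, chartMeasure]
  congr 1
  have hm : Measurable (fun s : ℝ => (dcirc (s - θ))^2) :=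
    (measurable_dcirc.comp (measurable_id.sub measurable_const)).pow_const 2
  rw [integral_map (measurable_invChart p₀).aemeasurable hm.aestronglyMeasurable]
  apply integral_congr_ae
  apply ae_of_all
  intro x
  have : dS1 x (chart p₀ θ) = dcirc (invChart p₀ x - θ) := by
    conv_lhs => rw [← chart_invChart p₀ x]
    exact dS1_chart_chart p₀ (invChart_mem p₀ x) hθ
  show dS1 x (chart p₀ θ)^2 = dcirc (invChart p₀ x - θ)^2
  rw [this]

lemma integrable_dcirc_sq (μ : Measure S1) [IsProbabilityMeasure μ] (p₀ : S1) {θ : ℝ}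
    (hθ : θ ∈ Ico (-π) π) :
    Integrable (fun s => (dcirc (s - θ))^2) (chartMeasure μ p₀) := by
  apply Integrable.mono' (integrable_const (π^2))
    ((measurable_dcirc.comp (measurable_id.sub measurable_const)).pow_const 2).aestronglyMeasurable
  filter_upwards [chartMeasure_ae μ p₀] with s hs
  rw [Real.norm_eq_abs, abs_pow]
  have h1 : |dcirc (s - θ)| ≤ π := by
    apply dcirc_le
    rw [abs_le]
    obtain ⟨a1, a2⟩ := hs; obtain ⟨b1, b2⟩ := hθ
    constructor <;> linarith
  calc |dcirc (s-θ)|^2 ≤ π^2 := by nlinarith [abs_nonneg (dcirc (s-θ))]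

lemma integrable_id' (μ : Measure S1) [IsProbabilityMeasure μ] (p₀ : S1) :
    Integrable (fun s : ℝ => s) (chartMeasure μ p₀) := by
  apply Integrable.mono' (integrable_const π) measurable_id.aestronglyMeasurable
  filter_upwards [chartMeasure_ae μ p₀] with s hs
  rw [Real.norm_eq_abs, abs_le]
  exact ⟨hs.1, hs.2.le⟩

lemma integrable_max' (μ : Measure S1) [IsProbabilityMeasure μ] (p₀ : S1) (f : ℝ → ℝ)
    (hf : Continuous f) (hb : ∀ s ∈ Ico (-π) π, |f s| ≤ 4*π) :
    Integrable f (chartMeasure μ p₀) := by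
  apply Integrable.mono' (integrable_const (4*π)) hf.measurable.aestronglyMeasurable
  filter_upwards [chartMeasure_ae μ p₀] with s hs
  exact hb s hs

lemma G_eq_pos (μ : Measure S1) [IsProbabilityMeasure μ] (pstar : S1) {θ : ℝ}
    (hθ : θ ∈ Ico 0 π) :
    frechet μ (chart pstar θ) - frechet μ pstar
      = θ^2/2 - θ * mMean μ pstar - 2*π * ∫ s, max (θ - (s+π)) 0 ∂(chartMeasure μ pstar) := by
  have hpi := Real.pi_pos
  have hθ' : θ ∈ Ico (-π) π := ⟨by linarith [hθ.1], hθ.2⟩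
  have h0 : (0:ℝ) ∈ Ico (-π) π := ⟨by linarith, hpi⟩
  have e0 : frechet μ pstar = frechet μ (chart pstar 0) := by rw [chart_zero]
  rw [e0, frechet_chart μ pstar hθ', frechet_chart μ pstar h0]
  have hI1 := integrable_dcirc_sq μ pstar hθ'
  have hI2 := integrable_dcirc_sq μ pstar h0
  have hImax : Integrable (fun s => max (θ - (s+π)) 0) (chartMeasure μ pstar) := by
    apply integrable_max' μ pstar _ (by continuity)
    intro s hs
    rw [abs_of_nonneg (le_max_right _ _)]
    apply max_le _ (by linarith)
    obtain ⟨a1, a2⟩ := hs; obtain ⟨b1, b2⟩ := hθ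
    linarith
  rw [← integral_const_mul, ← integral_const_mul, ← integral_sub (hI1.const_mul _) (hI2.const_mul _)]
  have congr1 : ∫ s, ((1/2) * (dcirc (s-θ))^2 - (1/2) * (dcirc (s-0))^2) ∂(chartMeasure μ pstar)
      = ∫ s, (θ^2/2 - θ*s - 2*π*max (θ - (s+π)) 0) ∂(chartMeasure μ pstar) := by
    apply integral_congr_ae
    filter_upwards [chartMeasure_ae μ pstar] with s hs
    rw [sub_zero]
    exact dcirc_sq_pos hs hθ
  rw [congr1]
  have hIa : Integrable (fun s : ℝ => θ^2/2 - θ*s) (chartMeasure μ pstar) :=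
    (integrable_const _).sub ((integrable_id' μ pstar).const_mul θ)
  have hIb : Integrable (fun s : ℝ => 2*π*max (θ - (s+π)) 0) (chartMeasure μ pstar) :=
    hImax.const_mul _
  rw [integral_sub hIa hIb,
    integral_sub (integrable_const _) ((integrable_id' μ pstar).const_mul θ),
    integral_const, integral_const_mul, integral_const_mul]
  simp [mMean, measure_univ]

lemma G_eq_neg (μ : Measure S1) [IsProbabilityMeasure μ] (pstar : S1) {θ : ℝ}
    (hθ : θ ∈ Ico (-π) 0) :
    frechet μ (chart pstar θ) - frechet μ pstar
      = θ^2/2 - θ * mMean μ pstar - 2*π * ∫ s, max (s - π - θ) 0 ∂(chartMeasure μ pstar) := by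
  have hpi := Real.pi_pos
  have hθ' : θ ∈ Ico (-π) π := ⟨hθ.1, by linarith [hθ.2]⟩
  have h0 : (0:ℝ) ∈ Ico (-π) π := ⟨by linarith, hpi⟩
  have e0 : frechet μ pstar = frechet μ (chart pstar 0) := by rw [chart_zero]
  rw [e0, frechet_chart μ pstar hθ', frechet_chart μ pstar h0]
  have hI1 := integrable_dcirc_sq μ pstar hθ'
  have hI2 := integrable_dcirc_sq μ pstar h0
  have hImax : Integrable (fun s => max (s - π - θ) 0) (chartMeasure μ pstar) := by
    apply integrable_max' μ pstar _ (by continuity)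
    intro s hs
    rw [abs_of_nonneg (le_max_right _ _)]
    apply max_le _ (by linarith)
    obtain ⟨a1, a2⟩ := hs; obtain ⟨b1, b2⟩ := hθ
    linarith
  rw [← integral_const_mul, ← integral_const_mul, ← integral_sub (hI1.const_mul _) (hI2.const_mul _)]
  have congr1 : ∫ s, ((1/2) * (dcirc (s-θ))^2 - (1/2) * (dcirc (s-0))^2) ∂(chartMeasure μ pstar)
      = ∫ s, (θ^2/2 - θ*s - 2*π*max (s - π - θ) 0) ∂(chartMeasure μ pstar) := by
    apply integral_congr_ae
    filter_upwards [chartMeasure_ae μ pstar] with s hs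
    rw [sub_zero]
    exact dcirc_sq_neg hs hθ
  rw [congr1]
  have hIa : Integrable (fun s : ℝ => θ^2/2 - θ*s) (chartMeasure μ pstar) :=
    (integrable_const _).sub ((integrable_id' μ pstar).const_mul θ)
  have hIb : Integrable (fun s : ℝ => 2*π*max (s - π - θ) 0) (chartMeasure μ pstar) :=
    hImax.const_mul _
  rw [integral_sub hIa hIb,
    integral_sub (integrable_const _) ((integrable_id' μ pstar).const_mul θ),
    integral_const, integral_const_mul, integral_const_mul]
  simp [mMean, measure_univ]

lemma toReal_ofReal_max (a : ℝ) : (ENNReal.ofReal a).toReal = max a 0 := by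
  rcases le_total 0 a with h|h
  · rw [ENNReal.toReal_ofReal h, max_eq_left h]
  · rw [ENNReal.ofReal_of_nonpos h, max_eq_right h]; simp

lemma fubini_pos (ν : Measure ℝ) [IsFiniteMeasure ν] (h1 : ν (Iio (-π)) = 0) {θ : ℝ}
    (hθ : 0 ≤ θ) :
    ∫ s, max (θ - (s+π)) 0 ∂ν = ∫ t in (0:ℝ)..θ, (ν (Ico (-π) (-π+t))).toReal := by
  have hae : ∀ᵐ s ∂ν, -π ≤ s := by
    rw [ae_iff]
    refine measure_mono_null (fun s hs => ?_) h1
    simpa [mem_Iio] using not_le.1 hs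
  have hmono : Monotone (fun t => ν (Iio (-π+t))) :=
    fun a b hab => measure_mono (Iio_subset_Iio (by linarith))
  have hmeas : Measurable (fun t => ν (Iio (-π+t))) := hmono.measurable
  -- measure identity
  have hIoo : ∀ c : ℝ, -π ≤ c → ν (Ico (-π) c) = ν (Iio c) := by
    intro c hc
    refine le_antisymm (measure_mono (fun x hx => hx.2)) ?_
    calc ν (Iio c) ≤ ν (Iio (-π) ∪ Ico (-π) c) := by
          refine measure_mono (fun x hx => ?_)
          rcases lt_or_ge x (-π) with h|h
          · exact Or.inl h
          · exact Or.inr ⟨h, hx⟩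
      _ ≤ ν (Iio (-π)) + ν (Ico (-π) c) := measure_union_le _ _
      _ = ν (Ico (-π) c) := by rw [h1, zero_add]
  -- RHS
  have hRHS : ∫ t in (0:ℝ)..θ, (ν (Ico (-π) (-π+t))).toReal
      = (∫⁻ t in Ioc 0 θ, ν (Iio (-π+t))).toReal := by
    rw [intervalIntegral.integral_of_le hθ]
    rw [setIntegral_congr_fun measurableSet_Ioc
      (fun t ht => by rw [hIoo (-π+t) (by linarith [ht.1])])]
    exact integral_toReal (hmeas.aemeasurable.restrict)
      (ae_of_all _ (fun t => measure_lt_top ν _))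
  -- swap
  have hS : MeasurableSet {p : ℝ × ℝ | p.2 + π < p.1} :=
    measurableSet_lt ((measurable_snd).add_const π) measurable_fst
  have huncurry : (Function.uncurry fun t s => (Iio (-π+t)).indicator (1 : ℝ → ℝ≥0∞) s)
      = ({p : ℝ × ℝ | p.2 + π < p.1}).indicator 1 := by
    funext p
    simp only [Function.uncurry, indicator_apply, mem_Iio, mem_setOf_eq]
    congr 1
    exact propext ⟨fun h => by linarith, fun h => by linarith⟩
  have hswap : ∫⁻ t in Ioc 0 θ, ν (Iio (-π+t))
      = ∫⁻ s, ENNReal.ofReal (θ - (s+π)) ∂ν := by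
    calc ∫⁻ t in Ioc 0 θ, ν (Iio (-π+t))
        = ∫⁻ t in Ioc 0 θ, ∫⁻ s, (Iio (-π+t)).indicator 1 s ∂ν :=
          lintegral_congr fun t => (lintegral_indicator_one measurableSet_Iio).symm
      _ = ∫⁻ s, (∫⁻ t in Ioc 0 θ, (Iio (-π+t)).indicator 1 s) ∂ν := by
          refine lintegral_lintegral_swap ?_
          rw [huncurry]
          exact (measurable_one.indicator hS).aemeasurable
      _ = ∫⁻ s, ENNReal.ofReal (θ - (s+π)) ∂ν := by
          refine lintegral_congr_ae ?_
          filter_upwards [hae] with s hs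
          have e1 : ∀ t, (Iio (-π+t)).indicator (1 : ℝ → ℝ≥0∞) s = (Ioi (s+π)).indicator 1 t := by
            intro t
            simp only [indicator_apply, mem_Iio, mem_Ioi]
            congr 1
            exact propext ⟨fun h => by linarith, fun h => by linarith⟩
          simp_rw [e1]
          rw [lintegral_indicator_one measurableSet_Ioi, Measure.restrict_apply measurableSet_Ioi]
          have : Ioi (s+π) ∩ Ioc 0 θ = Ioc (s+π) θ := by
            ext t
            simp only [mem_inter_iff, mem_Ioi, mem_Ioc]
            constructor
            · rintro ⟨a, _, c⟩; exact ⟨a, c⟩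
            · rintro ⟨a, b⟩; exact ⟨a, lt_of_le_of_lt (by linarith) a, b⟩
          rw [this, Real.volume_Ioc]
  -- LHS
  have hmeas2 : Measurable (fun s => ENNReal.ofReal (θ - (s+π))) :=
    ENNReal.measurable_ofReal.comp (by fun_prop)
  have hLHS : ∫ s, max (θ - (s+π)) 0 ∂ν = (∫⁻ s, ENNReal.ofReal (θ - (s+π)) ∂ν).toReal := by
    rw [← integral_toReal hmeas2.aemeasurable (ae_of_all _ (fun s => ENNReal.ofReal_lt_top))]
    exact integral_congr_ae (ae_of_all _ (fun s => (toReal_ofReal_max _).symm))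
  rw [hLHS, hRHS, hswap]

lemma fubini_neg (ν : Measure ℝ) [IsFiniteMeasure ν] (h2 : ν (Ici π) = 0) {θ : ℝ}
    (hθ : θ ≤ 0) :
    ∫ s, max (s - π - θ) 0 ∂ν = ∫ t in θ..(0:ℝ), (ν (Ico (π+t) π)).toReal := by
  have hae : ∀ᵐ s ∂ν, s < π := by
    rw [ae_iff]
    refine measure_mono_null (fun s hs => ?_) h2
    simpa [mem_Ici] using not_lt.1 hs
  have hanti : Antitone (fun t => ν (Ici (π+t))) :=
    fun a b hab => measure_mono (Ici_subset_Ici.2 (by linarith))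
  have hmeas : Measurable (fun t => ν (Ici (π+t))) := hanti.measurable
  have hIci : ∀ c : ℝ, c ≤ π → ν (Ico c π) = ν (Ici c) := by
    intro c hc
    refine le_antisymm (measure_mono (fun x hx => hx.1)) ?_
    calc ν (Ici c) ≤ ν (Ico c π ∪ Ici π) := by
          refine measure_mono (fun x hx => ?_)
          rcases lt_or_ge x π with h|h
          · exact Or.inl ⟨hx, h⟩
          · exact Or.inr h
      _ ≤ ν (Ico c π) + ν (Ici π) := measure_union_le _ _
      _ = ν (Ico c π) := by rw [h2, add_zero]
  have hRHS : ∫ t in θ..(0:ℝ), (ν (Ico (π+t) π)).toReal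
      = (∫⁻ t in Ioc θ 0, ν (Ici (π+t))).toReal := by
    rw [intervalIntegral.integral_of_le hθ]
    rw [setIntegral_congr_fun measurableSet_Ioc
      (fun t ht => by rw [hIci (π+t) (by linarith [ht.2])])]
    exact integral_toReal (hmeas.aemeasurable.restrict)
      (ae_of_all _ (fun t => measure_lt_top ν _))
  have hS : MeasurableSet {p : ℝ × ℝ | π + p.1 ≤ p.2} :=
    measurableSet_le ((measurable_fst).const_add π) measurable_snd
  have huncurry : (Function.uncurry fun t s => (Ici (π+t)).indicator (1 : ℝ → ℝ≥0∞) s)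
      = ({p : ℝ × ℝ | π + p.1 ≤ p.2}).indicator 1 := by
    funext p
    simp only [Function.uncurry, indicator_apply, mem_Ici, mem_setOf_eq]
    rfl
  have hswap : ∫⁻ t in Ioc θ 0, ν (Ici (π+t))
      = ∫⁻ s, ENNReal.ofReal (s - π - θ) ∂ν := by
    calc ∫⁻ t in Ioc θ 0, ν (Ici (π+t))
        = ∫⁻ t in Ioc θ 0, ∫⁻ s, (Ici (π+t)).indicator 1 s ∂ν :=
          lintegral_congr fun t => (lintegral_indicator_one measurableSet_Ici).symm
      _ = ∫⁻ s, (∫⁻ t in Ioc θ 0, (Ici (π+t)).indicator 1 s) ∂ν := by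
          refine lintegral_lintegral_swap ?_
          rw [huncurry]
          exact (measurable_one.indicator hS).aemeasurable
      _ = ∫⁻ s, ENNReal.ofReal (s - π - θ) ∂ν := by
          refine lintegral_congr_ae ?_
          filter_upwards [hae] with s hs
          have e1 : ∀ t, (Ici (π+t)).indicator (1 : ℝ → ℝ≥0∞) s = (Iic (s-π)).indicator 1 t := by
            intro t
            simp only [indicator_apply, mem_Ici, mem_Iic]
            congr 1
            exact propext ⟨fun h => by linarith, fun h => by linarith⟩
          simp_rw [e1]
          rw [lintegral_indicator_one measurableSet_Iic, Measure.restrict_apply measurableSet_Iic]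
          have : Iic (s-π) ∩ Ioc θ 0 = Ioc θ (s-π) := by
            ext t
            simp only [mem_inter_iff, mem_Iic, mem_Ioc]
            constructor
            · rintro ⟨a, b, _⟩; exact ⟨b, a⟩
            · rintro ⟨a, b⟩; exact ⟨b, a, by linarith⟩
          rw [this, Real.volume_Ioc]
  have hmeas2 : Measurable (fun s => ENNReal.ofReal (s - π - θ)) :=
    ENNReal.measurable_ofReal.comp (by fun_prop)
  have hLHS : ∫ s, max (s - π - θ) 0 ∂ν = (∫⁻ s, ENNReal.ofReal (s - π - θ) ∂ν).toReal := by
    rw [← integral_toReal hmeas2.aemeasurable (ae_of_all _ (fun s => ENNReal.ofReal_lt_top))]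
    exact integral_congr_ae (ae_of_all _ (fun s => (toReal_ofReal_max _).symm))
  rw [hLHS, hRHS, hswap]

/-- Lemma `lemme:g`: explicit integral formula for
`G(θ) = F_μ(e_{p*}(θ)) - F_μ(p*)` at a global minimizer `p*`. -/
theorem G_integral_formula (μ : Measure S1) [IsProbabilityMeasure μ] (pstar : S1)
    (hmin : ∀ q : S1, frechet μ pstar ≤ frechet μ q) :
    (∀ θ ∈ Ico (0:ℝ) π,
      frechet μ (chart pstar θ) - frechet μ pstar
        = 2*π * ∫ t in (0:ℝ)..θ,
            (t / (2*π) - (chartMeasure μ pstar (Ico (-π) (-π + t))).toReal)) ∧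
    (∀ θ ∈ Ico (-π) (0:ℝ),
      frechet μ (chart pstar θ) - frechet μ pstar
        = 2*π * ∫ t in θ..(0:ℝ),
            (-t / (2*π) - (chartMeasure μ pstar (Ico (π + t) π)).toReal)) := by
  have hpi := Real.pi_pos
  set ν := chartMeasure μ pstar with hν
  set m := mMean μ pstar with hm
  have hJp : ∀ θ : ℝ, 0 ≤ ∫ s, max (θ - (s+π)) 0 ∂ν :=
    fun θ => integral_nonneg (fun s => le_max_right _ _)
  have hJn : ∀ θ : ℝ, 0 ≤ ∫ s, max (s - π - θ) 0 ∂ν :=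
    fun θ => integral_nonneg (fun s => le_max_right _ _)
  have hGpos : ∀ θ ∈ Ico (0:ℝ) π, θ * m ≤ θ^2/2 := by
    intro θ hθ
    have h1 := G_eq_pos μ pstar hθ
    have h2 : 0 ≤ frechet μ (chart pstar θ) - frechet μ pstar :=
      sub_nonneg.2 (hmin _)
    rw [h1] at h2
    have := hJp θ
    nlinarith
  have hGneg : ∀ θ ∈ Ico (-π) (0:ℝ), θ * m ≤ θ^2/2 := by
    intro θ hθ
    have h1 := G_eq_neg μ pstar hθ
    have h2 : 0 ≤ frechet μ (chart pstar θ) - frechet μ pstar :=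
      sub_nonneg.2 (hmin _)
    rw [h1] at h2
    have := hJn θ
    nlinarith
  have hm0 : m = 0 := by
    have hle : m ≤ 0 := by
      by_contra h
      push_neg at h
      set θ := min m (π/2) with hθdef
      have hθpos : 0 < θ := lt_min h (by linarith)
      have hθlt : θ < π := lt_of_le_of_lt (min_le_right _ _) (by linarith)
      have := hGpos θ ⟨hθpos.le, hθlt⟩
      have hθm : θ ≤ m := min_le_left _ _
      nlinarith
    have hge : 0 ≤ m := by
      by_contra h
      push_neg at h
      have hy : 0 < min (-m) (π/2) := lt_min (by linarith) (by linarith)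
      have hy2 : min (-m) (π/2) ≤ -m := min_le_left _ _
      have hy3 : min (-m) (π/2) ≤ π/2 := min_le_right _ _
      have hG := hGneg (-(min (-m) (π/2))) ⟨by linarith, by linarith⟩
      nlinarith
    linarith
  constructor
  · intro θ hθ
    rw [G_eq_pos μ pstar hθ, ← hν, ← hm, hm0,
      fubini_pos ν (chartMeasure_Iio μ pstar) hθ.1]
    have hint1 : IntervalIntegrable (fun t => t / (2*π)) volume 0 θ :=
      (continuous_id.div_const _).intervalIntegrable _ _
    have hmono : Monotone (fun t => (ν (Ico (-π) (-π+t))).toReal) := by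
      intro a b hab
      exact ENNReal.toReal_mono (measure_ne_top ν _)
        (measure_mono (Ico_subset_Ico_right (by linarith)))
    have hint2 : IntervalIntegrable (fun t => (ν (Ico (-π) (-π+t))).toReal) volume 0 θ :=
      (hmono.monotoneOn _).intervalIntegrable
    rw [intervalIntegral.integral_sub hint1 hint2, intervalIntegral.integral_div,
      integral_id]
    field_simp
    ring
  · intro θ hθ
    rw [G_eq_neg μ pstar hθ, ← hν, ← hm, hm0,
      fubini_neg ν (chartMeasure_Ici μ pstar) hθ.2.le]
    have hint1 : IntervalIntegrable (fun t => -t / (2*π)) volume θ 0 :=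
      ((continuous_neg).div_const _).intervalIntegrable _ _
    have hanti : Antitone (fun t => (ν (Ico (π+t) π)).toReal) := by
      intro a b hab
      exact ENNReal.toReal_mono (measure_ne_top ν _)
        (measure_mono (Ico_subset_Ico_left (by linarith)))
    have hint2 : IntervalIntegrable (fun t => (ν (Ico (π+t) π)).toReal) volume θ 0 :=
      (hanti.antitoneOn _).intervalIntegrable
    rw [intervalIntegral.integral_sub hint1 hint2]
    have : ∫ t in θ..(0:ℝ), -t / (2*π) = (-(∫ t in θ..(0:ℝ), t)) / (2*π) := by
      rw [← intervalIntegral.integral_neg, ← intervalIntegral.integral_div]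
    rw [this, integral_id]
    field_simp
    ring
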